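/- arXiv:1508.03613 — 3 statements merged into one kernel-verified Lean document; each statement's English description precedes it below -/
import Mathlib

section
/- Let (M,·) be a countable semigroup and suppose that for every semigroup structure 𝓜 based on (M,·) in a countable language and every 𝓜-definable IP set X ⊆ M there is an idempotent complete 1-type over 𝓜 containing the formula defining X. Then for every IP set X ⊆ M and every Y ⊆ X, either Y or X∖Y is an IP set. -/
open Filter FirstOrder FirstOrder.Language

attribute [local instance] Ultrafilter.mul

/-! ## Combinatorial notions in a semigroup -/

/-- `X` is an IP set: it contains `FP u` (all finite products, in increasing order of indices,
of distinct terms) of some sequence `u`. -/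
def IsIP {M : Type*} [Semigroup M] (X : Set M) : Prop :=
  ∃ u : Stream' M, Hindman.FP u ⊆ X

/-- `X` is IIP (infinitely IP): it contains an infinite set of the form `FP u`. -/
def IsIIP {M : Type*} [Semigroup M] (X : Set M) : Prop :=
  ∃ u : Stream' M, Hindman.FP u ⊆ X ∧ (Hindman.FP u).Infinite

/-- `X` is DIP (distinctly IP): it contains `FP u` for an injective sequence `u`. -/
def IsDIP {M : Type*} [Semigroup M] (X : Set M) : Prop :=
  ∃ u : Stream' M, Function.Injective u ∧ Hindman.FP u ⊆ X

/-- An ultrafilter is nonprincipal if it is not of the form `{A | a ∈ A}` for any `a`. -/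
def Ultrafilter.Nonprincipal {M : Type*} (U : Ultrafilter M) : Prop :=
  ∀ a : M, U ≠ pure a

/-- A semigroup is moving if the product of two nonprincipal ultrafilters
(for the ultrafilter product `A ∈ U * V ↔ {m | {n | m * n ∈ A} ∈ V} ∈ U`) is nonprincipal. -/
def IsMoving (M : Type*) [Semigroup M] : Prop :=
  ∀ U V : Ultrafilter M, U.Nonprincipal → V.Nonprincipal → (U * V).Nonprincipal

/-! ## Types over a semigroup structure -/

/-- Formulas in one free variable, with parameters from `M`. -/
abbrev Form1 (L : Language) (M : Type*) := L.Formula (M ⊕ Fin 1)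

/-- Formulas in two free variables (`x` and `y`), with parameters from `M`. -/
abbrev Form2 (L : Language) (M : Type*) := L.Formula (M ⊕ Fin 2)

/-- Realization of a 1-variable formula with parameters at the point `a`. -/
def Realize1 {L : Language} {M : Type*} (S : L.Structure M) (φ : Form1 L M) (a : M) : Prop :=
  @Formula.Realize L M S _ φ (Sum.elim id fun _ => a)

/-- Realization of a 2-variable formula with parameters at the pair `(a, b)`. -/
def Realize2 {L : Language} {M : Type*} (S : L.Structure M) (φ : Form2 L M) (a b : M) : Prop :=
  @Formula.Realize L M S _ φ (Sum.elim id ![a, b])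

/-- A complete 1-type over the structure `S` (with parameters for all elements of `M`):
a complete, finitely satisfiable (in `S`) set of formulas in one free variable. -/
def IsCompleteType1 {L : Language} {M : Type*} (S : L.Structure M)
    (p : Set (Form1 L M)) : Prop :=
  (∀ φ : Form1 L M, φ ∈ p ↔ φ.not ∉ p) ∧
    ∀ s : Finset (Form1 L M), ↑s ⊆ p → ∃ a : M, ∀ φ ∈ s, Realize1 S φ a

/-- A complete 2-type over the structure `S` (with parameters for all elements of `M`). -/
def IsCompleteType2 {L : Language} {M : Type*} (S : L.Structure M)
    (q : Set (Form2 L M)) : Prop :=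
  (∀ φ : Form2 L M, φ ∈ q ↔ φ.not ∉ q) ∧
    ∀ s : Finset (Form2 L M), ↑s ⊆ q → ∃ a b : M, ∀ φ ∈ s, Realize2 S φ a b

/-- `substX u φ` is `φ(u, y)`: the element `u` is substituted for the variable `x`. -/
def substX {L : Language} {M : Type*} (u : M) (φ : Form2 L M) : Form2 L M :=
  φ.subst (Sum.elim (fun m => Term.var (Sum.inl m))
    ![Term.var (Sum.inl u), Term.var (Sum.inr 1)])

/-- A 2-type `q(x, y)` is independent if for every `φ(x, y) ∈ q` there is `u ∈ M` with
`φ(u, y) ∈ q`. -/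
def IsIndependent {L : Language} {M : Type*} (q : Set (Form2 L M)) : Prop :=
  ∀ φ ∈ q, ∃ u : M, substX u φ ∈ q

/-- `toX φ` views the 1-variable formula `φ` as a 2-variable formula `φ(x)`. -/
def toX {L : Language} {M : Type*} (φ : Form1 L M) : Form2 L M :=
  φ.subst (Sum.elim (fun m => Term.var (Sum.inl m)) fun _ => Term.var (Sum.inr 0))

/-- `toY φ` views the 1-variable formula `φ` as a 2-variable formula `φ(y)`. -/
def toY {L : Language} {M : Type*} (φ : Form1 L M) : Form2 L M :=
  φ.subst (Sum.elim (fun m => Term.var (Sum.inl m)) fun _ => Term.var (Sum.inr 1))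

/-- `toXY f φ` is `φ(x · y)`, where `f` is the distinguished binary function symbol. -/
def toXY {L : Language} {M : Type*} (f : L.Functions 2) (φ : Form1 L M) : Form2 L M :=
  φ.subst (Sum.elim (fun m => Term.var (Sum.inl m))
    fun _ => Term.func f ![Term.var (Sum.inr 0), Term.var (Sum.inr 1)])

/-- A complete 1-type `p` over `S` is idempotent (with respect to the binary function symbol `f`
interpreted as the semigroup operation) if there is an independent complete 2-type `q(x, y)` with
`p(x) ⊆ q`, `p(y) ⊆ q` and `p(x · y) ⊆ q`. -/
def IsIdempotentType {L : Language} {M : Type*} (S : L.Structure M) (f : L.Functions 2)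
    (p : Set (Form1 L M)) : Prop :=
  IsCompleteType1 S p ∧
    ∃ q : Set (Form2 L M), IsCompleteType2 S q ∧ IsIndependent q ∧
      (∀ φ ∈ p, toX φ ∈ q) ∧ (∀ φ ∈ p, toY φ ∈ q) ∧ (∀ φ ∈ p, toXY f φ ∈ q)

/-- A 1-type over `S` is principal if it is realized by an element of `M`. -/
def IsPrincipalType {L : Language} {M : Type*} (S : L.Structure M)
    (p : Set (Form1 L M)) : Prop :=
  ∃ a : M, ∀ φ ∈ p, Realize1 S φ a

/-! ## Auxiliary definitions and lemmas -/

section Aux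

variable {L : FirstOrder.Language.{0, 0}} {M : Type*}

/-- `substUY f u φ` is `φ(u · y)` as a formula in one variable. -/
def substUY (f : L.Functions 2) (u : M) (φ : Form1 L M) : Form1 L M :=
  φ.subst (Sum.elim (fun m => Term.var (Sum.inl m))
    fun _ => Term.func f ![Term.var (Sum.inl u), Term.var (Sum.inr 0)])

variable {S : L.Structure M}

lemma realize1_not {φ : Form1 L M} {a : M} :
    Realize1 S φ.not a ↔ ¬ Realize1 S φ a := Iff.rfl

lemma realize2_not {φ : Form2 L M} {a b : M} :
    Realize2 S φ.not a b ↔ ¬ Realize2 S φ a b := Iff.rfl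

lemma realize1_inf {φ ψ : Form1 L M} {a : M} :
    Realize1 S (φ ⊓ ψ) a ↔ Realize1 S φ a ∧ Realize1 S ψ a := by
  letI := S; unfold Realize1; exact Formula.realize_inf

lemma realize2_inf {φ ψ : Form2 L M} {a b : M} :
    Realize2 S (φ ⊓ ψ) a b ↔ Realize2 S φ a b ∧ Realize2 S ψ a b := by
  letI := S; unfold Realize2; exact Formula.realize_inf

lemma formula_realize_subst {α β : Type*} {φ : L.Formula α} {tf : α → L.Term β} {v : β → M} :
    @Formula.Realize L M S _ (φ.subst tf) v ↔
      @Formula.Realize L M S _ φ (fun a => @Term.realize L M S _ v (tf a)) := by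
  letI := S; exact BoundedFormula.realize_subst

lemma realize2_substX {u a b : M} {φ : Form2 L M} :
    Realize2 S (substX u φ) a b ↔ Realize2 S φ u b := by
  letI := S
  unfold Realize2 substX
  rw [formula_realize_subst]
  have : (fun x => @Term.realize L M S _ (Sum.elim id ![a, b])
      ((Sum.elim (fun m => Term.var (Sum.inl m))
        ![Term.var (Sum.inl u), Term.var (Sum.inr 1)] : M ⊕ Fin 2 → L.Term (M ⊕ Fin 2)) x))
      = Sum.elim id ![u, b] := by
    funext x
    rcases x with m | i
    · simp [Term.realize]
    · fin_cases i <;> simp [Term.realize]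
  rw [this]

lemma realize2_toX {a b : M} {φ : Form1 L M} :
    Realize2 S (toX φ) a b ↔ Realize1 S φ a := by
  letI := S
  unfold Realize2 Realize1 toX
  rw [formula_realize_subst]
  have : (fun x => @Term.realize L M S _ (Sum.elim id ![a, b])
      ((Sum.elim (fun m => Term.var (Sum.inl m))
        (fun _ => Term.var (Sum.inr 0)) : M ⊕ Fin 1 → L.Term (M ⊕ Fin 2)) x))
      = Sum.elim id (fun _ => a) := by
    funext x
    rcases x with m | i
    · simp [Term.realize]
    · simp [Term.realize]
  rw [this]

lemma realize2_toY {a b : M} {φ : Form1 L M} :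
    Realize2 S (toY φ) a b ↔ Realize1 S φ b := by
  letI := S
  unfold Realize2 Realize1 toY
  rw [formula_realize_subst]
  have : (fun x => @Term.realize L M S _ (Sum.elim id ![a, b])
      ((Sum.elim (fun m => Term.var (Sum.inl m))
        (fun _ => Term.var (Sum.inr 1)) : M ⊕ Fin 1 → L.Term (M ⊕ Fin 2)) x))
      = Sum.elim id (fun _ => b) := by
    funext x
    rcases x with m | i
    · simp [Term.realize]
    · simp [Term.realize]
  rw [this]

variable [Semigroup M]

lemma realize2_toXY {f : L.Functions 2} (hf : ∀ x y : M, S.funMap f ![x, y] = x * y)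
    {a b : M} {φ : Form1 L M} :
    Realize2 S (toXY f φ) a b ↔ Realize1 S φ (a * b) := by
  letI := S
  unfold Realize2 Realize1 toXY
  rw [formula_realize_subst]
  have : (fun x => @Term.realize L M S _ (Sum.elim id ![a, b])
      ((Sum.elim (fun m => Term.var (Sum.inl m))
        (fun _ => Term.func f ![Term.var (Sum.inr 0), Term.var (Sum.inr 1)]) :
          M ⊕ Fin 1 → L.Term (M ⊕ Fin 2)) x))
      = Sum.elim id (fun _ => a * b) := by
    funext x
    rcases x with m | i
    · simp [Term.realize]
    · have := hf a b
      simp only [Sum.elim_inr, Term.realize]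
      rw [← this]
      congr 1
      funext j
      fin_cases j <;> simp [Term.realize]
  rw [this]

lemma realize1_substUY {f : L.Functions 2} (hf : ∀ x y : M, S.funMap f ![x, y] = x * y)
    {u a : M} {φ : Form1 L M} :
    Realize1 S (substUY f u φ) a ↔ Realize1 S φ (u * a) := by
  letI := S
  unfold Realize1 substUY
  rw [formula_realize_subst]
  have : (fun x => @Term.realize L M S _ (Sum.elim id (fun _ => a))
      ((Sum.elim (fun m => Term.var (Sum.inl m))
        (fun _ => Term.func f ![Term.var (Sum.inl u), Term.var (Sum.inr 0)]) :
          M ⊕ Fin 1 → L.Term (M ⊕ Fin 1)) x))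
      = Sum.elim id (fun _ => u * a) := by
    funext x
    rcases x with m | i
    · simp [Term.realize]
    · have := hf u a
      simp only [Sum.elim_inr, Term.realize]
      rw [← this]
      congr 1
      funext j
      fin_cases j <;> simp [Term.realize]
  rw [this]

/-! ### Closure properties of complete types -/

lemma mem1_of_not_mem {p : Set (Form1 L M)} (hp : IsCompleteType1 S p)
    {φ : Form1 L M} (h : φ ∉ p) : φ.not ∈ p := by
  by_contra hn; exact h ((hp.1 φ).2 hn)

lemma mem2_of_not_mem {q : Set (Form2 L M)} (hq : IsCompleteType2 S q)
    {φ : Form2 L M} (h : φ ∉ q) : φ.not ∈ q := by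
  by_contra hn; exact h ((hq.1 φ).2 hn)

lemma mem1_mono {p : Set (Form1 L M)} (hp : IsCompleteType1 S p)
    {φ ψ : Form1 L M} (hφ : φ ∈ p) (h : ∀ a, Realize1 S φ a → Realize1 S ψ a) : ψ ∈ p := by
  classical
  by_contra hψ
  have hnot : ψ.not ∈ p := mem1_of_not_mem hp hψ
  obtain ⟨a, ha⟩ := hp.2 {φ, ψ.not} (by
    intro x hx
    simp only [Finset.coe_insert, Finset.coe_singleton, Set.mem_insert_iff,
      Set.mem_singleton_iff] at hx
    rcases hx with rfl | rfl <;> assumption)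
  have h1 := ha φ (by simp)
  have h2 := ha ψ.not (by simp)
  exact realize1_not.mp h2 (h a h1)

lemma mem2_mono {q : Set (Form2 L M)} (hq : IsCompleteType2 S q)
    {φ ψ : Form2 L M} (hφ : φ ∈ q) (h : ∀ a b, Realize2 S φ a b → Realize2 S ψ a b) :
    ψ ∈ q := by
  classical
  by_contra hψ
  have hnot : ψ.not ∈ q := mem2_of_not_mem hq hψ
  obtain ⟨a, b, hab⟩ := hq.2 {φ, ψ.not} (by
    intro x hx
    simp only [Finset.coe_insert, Finset.coe_singleton, Set.mem_insert_iff,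
      Set.mem_singleton_iff] at hx
    rcases hx with rfl | rfl <;> assumption)
  have h1 := hab φ (by simp)
  have h2 := hab ψ.not (by simp)
  exact realize2_not.mp h2 (h a b h1)

lemma mem1_inf {p : Set (Form1 L M)} (hp : IsCompleteType1 S p)
    {φ ψ : Form1 L M} (hφ : φ ∈ p) (hψ : ψ ∈ p) : φ ⊓ ψ ∈ p := by
  classical
  by_contra hc
  have hnot : (φ ⊓ ψ).not ∈ p := mem1_of_not_mem hp hc
  obtain ⟨a, ha⟩ := hp.2 {φ, ψ, (φ ⊓ ψ).not} (by
    intro x hx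
    simp only [Finset.coe_insert, Finset.coe_singleton, Set.mem_insert_iff,
      Set.mem_singleton_iff] at hx
    rcases hx with rfl | rfl | rfl <;> assumption)
  have h1 := ha φ (by simp)
  have h2 := ha ψ (by simp)
  have h3 := ha (φ ⊓ ψ).not (by simp)
  exact realize1_not.mp h3 (realize1_inf.mpr ⟨h1, h2⟩)

lemma mem2_inf {q : Set (Form2 L M)} (hq : IsCompleteType2 S q)
    {φ ψ : Form2 L M} (hφ : φ ∈ q) (hψ : ψ ∈ q) : φ ⊓ ψ ∈ q := by
  classical
  by_contra hc
  have hnot : (φ ⊓ ψ).not ∈ q := mem2_of_not_mem hq hc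
  obtain ⟨a, b, hab⟩ := hq.2 {φ, ψ, (φ ⊓ ψ).not} (by
    intro x hx
    simp only [Finset.coe_insert, Finset.coe_singleton, Set.mem_insert_iff,
      Set.mem_singleton_iff] at hx
    rcases hx with rfl | rfl | rfl <;> assumption)
  have h1 := hab φ (by simp)
  have h2 := hab ψ (by simp)
  have h3 := hab (φ ⊓ ψ).not (by simp)
  exact realize2_not.mp h3 (realize2_inf.mpr ⟨h1, h2⟩)

/-- Transfer from the 2-type back to the 1-type. -/
lemma mem_p_of_toY_mem {p : Set (Form1 L M)} {q : Set (Form2 L M)}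
    (hp : IsCompleteType1 S p) (hq : IsCompleteType2 S q)
    (hpq : ∀ φ ∈ p, toY φ ∈ q) {θ : Form1 L M} (h : toY θ ∈ q) : θ ∈ p := by
  classical
  by_contra hθ
  have h2 : toY θ.not ∈ q := hpq _ (mem1_of_not_mem hp hθ)
  obtain ⟨a, b, hab⟩ := hq.2 {toY θ, toY θ.not} (by
    intro x hx
    simp only [Finset.coe_insert, Finset.coe_singleton, Set.mem_insert_iff,
      Set.mem_singleton_iff] at hx
    rcases hx with rfl | rfl <;> assumption)
  have h3 := realize2_toY.mp (hab (toY θ) (by simp))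
  have h4 := realize2_toY.mp (hab (toY θ.not) (by simp))
  exact realize1_not.mp h4 h3

/-- The key step (Galvin's argument at the level of types): from an idempotent type
we can pick, for each formula in the type, a witness whose translate stays in the type. -/
lemma key_step {f : L.Functions 2} (hf : ∀ x y : M, S.funMap f ![x, y] = x * y)
    {p : Set (Form1 L M)} {q : Set (Form2 L M)}
    (hp : IsCompleteType1 S p) (hq : IsCompleteType2 S q) (hind : IsIndependent q)
    (hX : ∀ φ ∈ p, toX φ ∈ q) (hY : ∀ φ ∈ p, toY φ ∈ q) (hXY : ∀ φ ∈ p, toXY f φ ∈ q)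
    {ψ : Form1 L M} (hψ : ψ ∈ p) :
    ∃ u : M, Realize1 S ψ u ∧ substUY f u ψ ∈ p := by
  classical
  have hχ : toX ψ ⊓ toXY f ψ ∈ q := mem2_inf hq (hX _ hψ) (hXY _ hψ)
  obtain ⟨u, hu⟩ := hind _ hχ
  refine ⟨u, ?_, ?_⟩
  · obtain ⟨a, b, hab⟩ := hq.2 {substX u (toX ψ ⊓ toXY f ψ)} (by
      intro x hx
      simp only [Finset.coe_singleton, Set.mem_singleton_iff] at hx
      subst hx; exact hu)
    have h1 := hab (substX u (toX ψ ⊓ toXY f ψ)) (by simp)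
    have h2 := (realize2_inf.mp (realize2_substX.mp h1)).1
    exact realize2_toX.mp h2
  · have h5 : toY (substUY f u ψ) ∈ q := by
      refine mem2_mono hq hu ?_
      intro a b hab
      have h2 := (realize2_inf.mp (realize2_substX.mp hab)).2
      have h3 : Realize1 S ψ (u * b) := (realize2_toXY hf).mp h2
      exact realize2_toY.mpr ((realize1_substUY hf).mpr h3)
    exact mem_p_of_toY_mem hp hq hY h5

/-- Galvin's construction: a formula in an idempotent type defines an IP set. -/
lemma isIP_of_mem_idempotent {f : L.Functions 2} (hf : ∀ x y : M, S.funMap f ![x, y] = x * y)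
    {p : Set (Form1 L M)} (hp : IsCompleteType1 S p)
    (key : ∀ ψ ∈ p, ∃ u : M, Realize1 S ψ u ∧ substUY f u ψ ∈ p)
    {ψ0 : Form1 L M} (h0 : ψ0 ∈ p) :
    ∃ u : Stream' M, Hindman.FP u ⊆ {a : M | Realize1 S ψ0 a} := by
  classical
  choose g hg1 hg2 using key
  let F : {ψ : Form1 L M // ψ ∈ p} → {ψ : Form1 L M // ψ ∈ p} := fun ψ =>
    ⟨ψ.1 ⊓ substUY f (g ψ.1 ψ.2) ψ.1, mem1_inf hp ψ.2 (hg2 ψ.1 ψ.2)⟩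
  let r : ℕ → {ψ : Form1 L M // ψ ∈ p} := fun n => F^[n] ⟨ψ0, h0⟩
  let u : Stream' M := fun n => g (r n).1 (r n).2
  have hr_succ : ∀ n, r (n + 1) = F (r n) := fun n => Function.iterate_succ_apply' F n _
  have main : ∀ (a : M) (v : Stream' M), a ∈ Hindman.FP v →
      ∀ n, v = u.drop n → Realize1 S (r n).1 a := by
    intro a v hav
    induction hav with
    | head' w =>
      intro n hn
      subst hn
      have hw : (u.drop n).head = u n := by rw [Stream'.head_drop]; rfl
      rw [hw]
      exact hg1 (r n).1 (r n).2
    | tail' w m h ih =>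
      intro n hn
      have := ih (n + 1) (by rw [hn]; exact Stream'.tail_drop')
      rw [hr_succ n] at this
      exact (realize1_inf.mp this).1
    | cons' w m h ih =>
      intro n hn
      have hih := ih (n + 1) (by rw [hn]; exact Stream'.tail_drop')
      rw [hr_succ n] at hih
      have h2 := (realize1_inf.mp hih).2
      have h3 : Realize1 S (r n).1 (u n * m) := (realize1_substUY hf).mp h2
      have hw : w.head = u n := by rw [hn, Stream'.head_drop]; rfl
      rw [hw]
      exact h3
  refine ⟨u, fun a ha => ?_⟩
  have := main a u ha 0 (by rw [Stream'.drop_zero])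
  exact this

end Aux

/-! ### The concrete language with a product symbol and predicates for `X` and `Y` -/

/-- Function symbols: a single binary symbol. -/
abbrev pFun : ℕ → Type := fun n => match n with
  | 2 => PUnit
  | _ => Empty

/-- Relation symbols: two unary symbols (for `X` and `Y`). -/
abbrev pRel : ℕ → Type := fun n => match n with
  | 1 => Bool
  | _ => Empty

/-- The language with one binary function symbol and two unary relation symbols. -/
def pLang : FirstOrder.Language.{0, 0} := ⟨pFun, pRel⟩

instance pFun_countable : ∀ n, Countable (pFun n) := fun n =>
  match n with
  | 0 => inferInstanceAs (Countable Empty)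
  | 1 => inferInstanceAs (Countable Empty)
  | 2 => inferInstanceAs (Countable PUnit)
  | (_ + 3) => inferInstanceAs (Countable Empty)

instance pRel_countable : ∀ n, Countable (pRel n) := fun n =>
  match n with
  | 0 => inferInstanceAs (Countable Empty)
  | 1 => inferInstanceAs (Countable Bool)
  | (_ + 2) => inferInstanceAs (Countable Empty)

instance pLang_countable : Countable pLang.Symbols := by
  unfold Language.Symbols
  exact inferInstanceAs (Countable ((Σ l, pFun l) ⊕ (Σ l, pRel l)))

/-- The structure on `M` interpreting the function symbol as multiplication and the
relation symbols as membership in `X` and `Y`. -/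
def pStruc (M : Type*) [Semigroup M] (X Y : Set M) : pLang.Structure M where
  funMap {n} f v :=
    match n, f with
    | 2, _ => v 0 * v 1
  RelMap {n} r v :=
    match n, r with
    | 1, true => v 0 ∈ X
    | 1, false => v 0 ∈ Y

/-- if for every semigroup structure based on the countable semigroup `(M, ·)`
in a countable language every definable IP set is contained in some idempotent complete 1-type,
then IP sets in `M` are partition regular. -/
theorem hindman_of_exists_idempotent_type {M : Type*} [Semigroup M] [Countable M]
    (h : ∀ (L : FirstOrder.Language.{0, 0}), Countable L.Symbols →
      ∀ (f : L.Functions 2) (S : L.Structure M),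
        (∀ x y : M, S.funMap f ![x, y] = x * y) →
        ∀ φ : Form1 L M, IsIP {a : M | Realize1 S φ a} →
          ∃ p : Set (Form1 L M), φ ∈ p ∧ IsIdempotentType S f p)
    (X : Set M) (hX : IsIP X) (Y : Set M) (hYX : Y ⊆ X) : IsIP Y ∨ IsIP (X \ Y) := by
  classical
  set S : pLang.Structure M := pStruc M X Y with hS
  have hf : ∀ x y : M, S.funMap (n := 2) (PUnit.unit : pLang.Functions 2) ![x, y] = x * y := by
    intro x y; rfl
  set fX : Form1 pLang M :=
    Relations.formula₁ (true : pLang.Relations 1) (Term.var (Sum.inr 0)) with hfXdef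
  set fY : Form1 pLang M :=
    Relations.formula₁ (false : pLang.Relations 1) (Term.var (Sum.inr 0)) with hfYdef
  have hfX : ∀ a : M, Realize1 S fX a ↔ a ∈ X := by
    intro a
    letI := S
    unfold fX
    unfold Realize1
    erw [Formula.realize_rel₁]
    exact Iff.rfl
  have hfY : ∀ a : M, Realize1 S fY a ↔ a ∈ Y := by
    intro a
    letI := S
    unfold fY
    unfold Realize1
    erw [Formula.realize_rel₁]
    exact Iff.rfl
  have hsetX : {a : M | Realize1 S fX a} = X := Set.ext hfX
  obtain ⟨p, hmem, hp, q, hq, hind, hqX, hqY, hqXY⟩ :=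
    h pLang pLang_countable PUnit.unit S hf fX (by rw [hsetX]; exact hX)
  have key : ∀ ψ ∈ p, ∃ u : M, Realize1 S ψ u ∧ substUY PUnit.unit u ψ ∈ p :=
    fun ψ hψ => key_step hf hp hq hind hqX hqY hqXY hψ
  by_cases hYp : fY ∈ p
  · obtain ⟨u, hu⟩ := isIP_of_mem_idempotent hf hp key hYp
    exact Or.inl ⟨u, fun a ha => (hfY a).mp (hu ha)⟩
  · have hYn : fY.not ∈ p := mem1_of_not_mem hp hYp
    have h0 : fX ⊓ fY.not ∈ p := mem1_inf hp hmem hYn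
    obtain ⟨u, hu⟩ := isIP_of_mem_idempotent hf hp key h0
    refine Or.inr ⟨u, fun a ha => ?_⟩
    have := realize1_inf.mp (hu ha)
    exact ⟨(hfX a).mp this.1, fun hmemY => realize1_not.mp this.2 ((hfY a).mpr hmemY)⟩
end

section
/- In a moving semigroup (M,·), the collection of DIP sets is partition regular: if A ⊆ M is DIP and A = Y ∪ Z, then Y or Z is DIP. -/
open Filter FirstOrder FirstOrder.Language

attribute [local instance] Ultrafilter.mul

attribute [local instance] Ultrafilter.semigroup

private lemma nonprincipal_iff' {M : Type*} (U : Ultrafilter M) :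
    U.Nonprincipal ↔ ∀ a : M, ({a}ᶜ : Set M) ∈ U := by
  constructor
  · intro h a
    by_contra hc
    rw [Ultrafilter.compl_mem_iff_notMem, not_not] at hc
    obtain ⟨x, hx, hU⟩ := Ultrafilter.eq_pure_of_finite_mem (Set.finite_singleton a) hc
    rw [Set.mem_singleton_iff] at hx
    exact h a (hx ▸ hU)
  · intro h a heq
    have := h a
    rw [heq, Ultrafilter.mem_pure] at this
    exact this rfl

private lemma fp_get_mem {M : Type*} [Semigroup M] (u : Stream' M) :
    ∀ (k n : ℕ), u.get (n + k) ∈ Hindman.FP (u.drop n) := by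
  intro k
  induction k with
  | zero =>
    intro n
    have := Hindman.FP.head (u.drop n)
    rwa [Stream'.head_drop] at this
  | succ k ih =>
    intro n
    have h1 := ih (n + 1)
    have h2 : u.get (n + (k + 1)) ∈ Hindman.FP ((u.drop n).tail) := by
      rw [Stream'.tail_drop']
      have : n + (k + 1) = (n + 1) + k := by omega
      rwa [this]
    exact Hindman.FP.tail _ _ h2

private lemma fp_drop_succ_subset {M : Type*} [Semigroup M] (u : Stream' M) (n : ℕ) :
    Hindman.FP (u.drop (n + 1)) ⊆ Hindman.FP (u.drop n) := by
  intro m hm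
  apply Hindman.FP.tail
  rwa [Stream'.tail_drop']

private lemma fp_drop_mono {M : Type*} [Semigroup M] (u : Stream' M) {m n : ℕ} (h : m ≤ n) :
    Hindman.FP (u.drop n) ⊆ Hindman.FP (u.drop m) := by
  induction n, h using Nat.le_induction with
  | base => exact fun _ h => h
  | succ n _ ih => exact fun x hx => ih (fp_drop_succ_subset u n hx)

private lemma fp_drop_infinite {M : Type*} [Semigroup M] (u : Stream' M)
    (hu : Function.Injective u) (n : ℕ) : (Hindman.FP (u.drop n)).Infinite := by
  refine Set.infinite_of_injective_forall_mem (f := fun k : ℕ => u.get (n + k)) ?_ ?_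
  · intro i j hij
    have := hu hij
    omega
  · intro k
    exact fp_get_mem u k n

/-- In a moving semigroup, an injective sequence's FP sets live in some nonprincipal
idempotent ultrafilter. -/
private lemma exists_np_idem {M : Type*} [Semigroup M] (hM : IsMoving M) (u : Stream' M)
    (hu : Function.Injective u) :
    ∃ U : Ultrafilter M, U * U = U ∧ U.Nonprincipal ∧ Hindman.FP u ∈ U := by
  let S : Set (Ultrafilter M) :=
    (⋂ n, { U | Hindman.FP (u.drop n) ∈ U }) ∩ ⋂ a : M, { U | ({a}ᶜ : Set M) ∈ U }
  have hS : ∀ U ∈ S, U.Nonprincipal ∧ ∀ n, Hindman.FP (u.drop n) ∈ U := by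
    intro U hU
    refine ⟨(nonprincipal_iff' U).2 fun a => ?_, fun n => Set.mem_iInter.mp hU.1 n⟩
    exact Set.mem_iInter.mp hU.2 a
  have h := exists_idempotent_in_compact_subsemigroup
    (M := Ultrafilter M) Ultrafilter.continuous_mul_left S ?_ ?_ ?_
  · obtain ⟨U, hU, U_idem⟩ := h
    obtain ⟨hnp, hfp⟩ := hS U hU
    refine ⟨U, U_idem, hnp, ?_⟩
    have := hfp 0
    rwa [Stream'.drop_zero] at this
  · -- nonempty
    set F : Filter M := Filter.cofinite ⊓ ⨅ n, Filter.principal (Hindman.FP (u.drop n)) with hF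
    have hdir : Directed (· ≥ ·) fun n : ℕ => Filter.principal (Hindman.FP (u.drop n)) := by
      intro m n
      refine ⟨max m n, ?_, ?_⟩ <;>
        simp only [ge_iff_le, Filter.le_principal_iff, Filter.mem_principal] <;>
        exact fp_drop_mono u (by omega)
    have hne : F.NeBot := by
      rw [Filter.neBot_iff]
      intro hbot
      rw [Filter.inf_eq_bot_iff] at hbot
      obtain ⟨t, ht, v, hv, htv⟩ := hbot
      rw [Filter.mem_iInf_of_directed hdir] at hv
      obtain ⟨n, hn⟩ := hv
      rw [Filter.mem_principal] at hn
      have hinf := fp_drop_infinite u hu n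
      have : (Hindman.FP (u.drop n) \ tᶜ).Infinite := hinf.diff ht
      obtain ⟨x, hx⟩ := this.nonempty
      have : x ∈ t ∩ v := ⟨by simpa using hx.2, hn hx.1⟩
      rw [htv] at this
      exact this
    obtain ⟨U, hU⟩ := Filter.exists_ultrafilter_le F
    refine ⟨U, Set.mem_inter ?_ ?_⟩
    · rw [Set.mem_iInter]
      intro n
      exact hU (Filter.mem_inf_of_right (Filter.mem_iInf_of_mem n (Filter.mem_principal_self _)))
    · rw [Set.mem_iInter]
      intro a
      exact hU (Filter.mem_inf_of_left (Set.finite_singleton a).compl_mem_cofinite)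
  · -- compact
    apply IsClosed.isCompact
    exact IsClosed.inter (isClosed_iInter fun n => ultrafilter_isClosed_basic _)
      (isClosed_iInter fun a => ultrafilter_isClosed_basic _)
  · -- subsemigroup
    intro U hU V hV
    obtain ⟨Unp, Ufp⟩ := hS U hU
    obtain ⟨Vnp, Vfp⟩ := hS V hV
    constructor
    · rw [Set.mem_iInter]
      intro n
      rw [Set.mem_setOf_eq]
      show { m | { m' | m * m' ∈ Hindman.FP (u.drop n) } ∈ V } ∈ U
      filter_upwards [Ufp n] with m hm
      obtain ⟨n', hn⟩ := Hindman.FP.mul hm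
      filter_upwards [Vfp (n + n')] with m' hm'
      apply hn
      simpa only [Stream'.drop_drop] using hm'
    · rw [Set.mem_iInter]
      intro a
      exact ((nonprincipal_iff' (U * V)).1 (hM U V Unp Vnp)) a

/-- Galvin–Glazer with injectivity, for nonprincipal idempotent ultrafilters. -/
private lemma exists_injective_FP {M : Type*} [Semigroup M] (U : Ultrafilter M)
    (U_idem : U * U = U) (hnp : U.Nonprincipal) {s₀ : Set M} (sU : s₀ ∈ U) : IsDIP s₀ := by
  have hnp' := (nonprincipal_iff' U).1 hnp
  have exists_elem : ∀ {s : Set M}, s ∈ U → (s ∩ { m | ∀ᶠ m' in U, m * m' ∈ s }).Nonempty :=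
    fun {s} hs => Ultrafilter.nonempty_of_mem (Filter.inter_mem hs <| by rwa [← U_idem] at hs)
  let elem : { s // s ∈ U } → M := fun p => (exists_elem p.property).some
  let succ : { s // s ∈ U } → { s // s ∈ U } := fun p =>
    ⟨p.val ∩ { m : M | elem p * m ∈ p.val } ∩ {elem p}ᶜ,
      Filter.inter_mem
        (Filter.inter_mem p.property (exists_elem p.property).some_mem.2) (hnp' (elem p))⟩
  let p : ℕ → { s // s ∈ U } := fun n => succ^[n] ⟨s₀, sU⟩
  have hpsucc : ∀ n, p (n + 1) = succ (p n) := fun n => Function.iterate_succ_apply' succ n _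
  let a : Stream' M := fun n => elem (p n)
  have hmem : ∀ n, a n ∈ (p n).val := fun n => (exists_elem (p n).property).some_mem.1
  have hsub : ∀ n, (p (n + 1)).val ⊆ (p n).val := by
    intro n x hx
    rw [hpsucc n] at hx
    exact hx.1.1
  have hmono : ∀ {m n : ℕ}, m ≤ n → (p n).val ⊆ (p m).val := by
    intro m n h
    induction n, h using Nat.le_induction with
    | base => exact fun _ h => h
    | succ n _ ih => exact fun x hx => ih (hsub n hx)
  have hnotmem : ∀ n, a n ∉ (p (n + 1)).val := by
    intro n hx
    rw [hpsucc n] at hx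
    exact hx.2 rfl
  have hinj : Function.Injective a := by
    have key : ∀ {i j : ℕ}, i < j → a i ≠ a j := by
      intro i j hij heq
      apply hnotmem i
      rw [heq]
      exact hmono hij (hmem j)
    intro i j h
    rcases lt_trichotomy i j with hij | hij | hij
    · exact absurd h (key hij)
    · exact hij
    · exact absurd h.symm (key hij)
  refine ⟨a, hinj, ?_⟩
  have claim : ∀ (s : Stream' M), ∀ m ∈ Hindman.FP s, ∀ k, s = Stream'.drop k a →
      m ∈ (p k).val := by
    intro s m hm
    induction hm with
    | head' b =>
      rintro k rfl
      rw [Stream'.head_drop]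
      exact hmem k
    | tail' b m h ih =>
      rintro k rfl
      have := ih (k + 1) (by rw [Stream'.tail_drop'])
      exact hsub k this
    | cons' b m h ih =>
      rintro k rfl
      have hm' := ih (k + 1) (by rw [Stream'.tail_drop'])
      rw [hpsucc k] at hm'
      rw [Stream'.head_drop]
      exact hm'.1.2
  intro m hm
  exact claim a m hm 0 rfl

/-- in a moving semigroup, DIP sets are partition regular. -/
theorem isDIP_partition_regular {M : Type*} [Semigroup M] (hM : IsMoving M)
    (A Y Z : Set M) (hA : IsDIP A) (hYZ : A = Y ∪ Z) : IsDIP Y ∨ IsDIP Z := by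
  obtain ⟨u, hui, huA⟩ := hA
  obtain ⟨U, Uidem, Unp, hFPU⟩ := exists_np_idem hM u hui
  have hAU : A ∈ U := Filter.mem_of_superset hFPU huA
  rw [hYZ, Ultrafilter.union_mem_iff] at hAU
  rcases hAU with hY | hZ
  · exact Or.inl (exists_injective_FP U Uidem Unp hY)
  · exact Or.inr (exists_injective_FP U Uidem Unp hZ)
end

section
/- In a moving semigroup (M,·), a set A ⊆ M is IIP if and only if it is DIP. -/
open Filter FirstOrder FirstOrder.Language

attribute [local instance] Ultrafilter.mul

/-! ## Auxiliary lemmas for Statement 9 -/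

attribute [local instance] Ultrafilter.semigroup

section Aux

open Hindman

theorem fp_tail_infinite {M : Type*} [Semigroup M] {a : Stream' M}
    (h : (FP a).Infinite) : (FP a.tail).Infinite := by
  by_contra hfin
  rw [Set.not_infinite] at hfin
  apply h
  have hsub : FP a ⊆ {a.head} ∪ (FP a.tail ∪ (a.head * ·) '' FP a.tail) := by
    intro m hm
    cases hm with
    | head' => exact Or.inl rfl
    | tail' _ _ h => exact Or.inr (Or.inl h)
    | cons' _ _ h => exact Or.inr (Or.inr ⟨_, h, rfl⟩)
  exact Set.Finite.subset ((Set.finite_singleton _).union (hfin.union (hfin.image _))) hsub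

theorem fp_drop_infinite_s9 {M : Type*} [Semigroup M] {a : Stream' M}
    (h : (FP a).Infinite) (n : ℕ) : (FP (a.drop n)).Infinite := by
  induction n with
  | zero => simpa using h
  | succ n ih =>
    rw [← Stream'.tail_drop']
    exact fp_tail_infinite ih

theorem nonprincipal_iff_le_cofinite {M : Type*} (U : Ultrafilter M) :
    U.Nonprincipal ↔ (↑U : Filter M) ≤ Filter.cofinite := by
  constructor
  · intro h
    rcases U.le_cofinite_or_eq_pure with h' | ⟨a, ha⟩
    · exact h'
    · exact absurd ha (h a)
  · intro h a ha
    have hmem : ({a}ᶜ : Set M) ∈ U := Filter.le_cofinite_iff_compl_singleton_mem.mp h a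
    rw [ha] at hmem
    simp at hmem

theorem exists_injective_FP_of_idem {M : Type*} [Semigroup M] (U : Ultrafilter M)
    (U_idem : U * U = U) (hcof : (↑U : Filter M) ≤ Filter.cofinite) (s₀ : Set M) (sU : s₀ ∈ U) :
    ∃ a : Stream' M, Function.Injective a ∧ FP a ⊆ s₀ := by
  have exists_elem : ∀ {s : Set M} (_hs : s ∈ U), (s ∩ { m | ∀ᶠ m' in U, m * m' ∈ s }).Nonempty :=
    fun {s} hs => Ultrafilter.nonempty_of_mem (inter_mem hs <| by rwa [← U_idem] at hs)
  let elem : { s // s ∈ U } → M := fun p => (exists_elem p.property).some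
  let succ : { s // s ∈ U } → { s // s ∈ U } := fun p =>
    ⟨p.val ∩ { m | elem p * m ∈ p.val } ∩ {elem p}ᶜ,
      inter_mem
        (inter_mem p.property
          (show (exists_elem p.property).some ∈ { m : M | ∀ᶠ m' in ↑U, m * m' ∈ p.val } from
            p.val.inter_subset_right (exists_elem p.property).some_mem))
        (Filter.le_cofinite_iff_compl_singleton_mem.mp hcof _)⟩
  have helem : ∀ p : { s // s ∈ U }, elem p ∈ p.val := fun p =>
    p.val.inter_subset_left (exists_elem p.property).some_mem
  have hsub : ∀ p, (succ p).val ⊆ p.val := fun p =>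
    Set.inter_subset_left.trans Set.inter_subset_left
  have hmulmem : ∀ p, (succ p).val ⊆ { m | elem p * m ∈ p.val } := fun p =>
    Set.inter_subset_left.trans Set.inter_subset_right
  have hne : ∀ p, (succ p).val ⊆ {elem p}ᶜ := fun _ => Set.inter_subset_right
  have hiter : ∀ (k : ℕ) (p), (succ^[k] p).val ⊆ p.val := by
    intro k
    induction k with
    | zero => intro p; exact subset_rfl
    | succ k ih =>
      intro p
      rw [Function.iterate_succ_apply]
      exact (ih (succ p)).trans (hsub p)
  have hget : ∀ (n : ℕ) (p), (Stream'.corec elem succ p).get n = elem (succ^[n] p) := by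
    intro n
    induction n with
    | zero => intro p; rw [Stream'.corec_eq, Stream'.get_zero_cons]; rfl
    | succ n ih =>
      intro p
      rw [Stream'.corec_eq, Stream'.get_succ_cons, ih, Function.iterate_succ_apply]
  refine ⟨Stream'.corec elem succ ⟨s₀, sU⟩, ?_, ?_⟩
  · have key : ∀ i j : ℕ, i < j →
        (Stream'.corec elem succ ⟨s₀, sU⟩).get j ≠ (Stream'.corec elem succ ⟨s₀, sU⟩).get i := by
      intro i j hij
      rw [hget, hget]
      obtain ⟨d, rfl⟩ : ∃ d, j = i + d + 1 := ⟨j - i - 1, by omega⟩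
      set p := succ^[i] (⟨s₀, sU⟩ : { s // s ∈ U }) with hp
      have h1 : succ^[i + d + 1] (⟨s₀, sU⟩ : { s // s ∈ U }) = succ^[d] (succ p) := by
        rw [show i + d + 1 = d + (i + 1) by omega, Function.iterate_add_apply,
          Function.iterate_succ_apply']
      have hmem : elem (succ^[d] (succ p)) ∈ (succ p).val := hiter d (succ p) (helem _)
      have hcne := hne p hmem
      rw [h1]
      simpa using hcne
    intro i j hij
    rcases lt_trichotomy i j with h | h | h
    · exact absurd hij.symm (key i j h)
    · exact h
    · exact absurd hij (key j i h)
  · suffices H : ∀ a : Stream' M, ∀ m ∈ FP a, ∀ p, a = Stream'.corec elem succ p → m ∈ p.val by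
      intro m hm
      exact H _ m hm ⟨s₀, sU⟩ rfl
    intro a m h
    induction' h with b b n h ih b n h ih
    · rintro p rfl
      rw [Stream'.corec_eq, Stream'.head_cons]
      exact helem p
    · rintro p rfl
      refine hsub p (ih (succ p) ?_)
      rw [Stream'.corec_eq, Stream'.tail_cons]
    · rintro p rfl
      rw [Stream'.corec_eq, Stream'.head_cons]
      exact hmulmem p (ih (succ p) (by rw [Stream'.corec_eq, Stream'.tail_cons]))

end Aux

/-- in a moving semigroup, the notions IIP and DIP coincide. -/
theorem isIIP_iff_isDIP {M : Type*} [Semigroup M] (hM : IsMoving M) (A : Set M) :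
    IsIIP A ↔ IsDIP A := by
  constructor
  · rintro ⟨u, huA, huInf⟩
    set B : ℕ → Set M := fun n => Hindman.FP (u.drop n) with hB
    have hBinf : ∀ n, (B n).Infinite := fun n => fp_drop_infinite_s9 huInf n
    set D : ℕ → Set (Ultrafilter M) :=
      fun n => { U | B n ∈ U } ∩ { U | (↑U : Filter M) ≤ Filter.cofinite } with hD
    have hTclosed : IsClosed { U : Ultrafilter M | (↑U : Filter M) ≤ Filter.cofinite } := by
      have heq : { U : Ultrafilter M | (↑U : Filter M) ≤ Filter.cofinite } =
          ⋂ x : M, { U : Ultrafilter M | ({x}ᶜ : Set M) ∈ U } := by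
        ext U
        simp only [Set.mem_setOf_eq, Set.mem_iInter, Filter.le_cofinite_iff_compl_singleton_mem,
          Ultrafilter.mem_coe]
      rw [heq]
      exact isClosed_iInter fun x => ultrafilter_isClosed_basic _
    have hDclosed : ∀ n, IsClosed (D n) := fun n =>
      (ultrafilter_isClosed_basic _).inter hTclosed
    have hDnonempty : ∀ n, (D n).Nonempty := by
      intro n
      haveI : (Filter.cofinite ⊓ Filter.principal (B n)).NeBot :=
        Filter.cofinite_inf_principal_neBot_iff.2 (hBinf n)
      refine ⟨Ultrafilter.of (Filter.cofinite ⊓ Filter.principal (B n)), ?_, ?_⟩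
      · exact (Ultrafilter.of_le _).trans inf_le_right (Filter.mem_principal_self _)
      · exact le_trans (Ultrafilter.of_le _) inf_le_left
    have hDmono : ∀ n, D (n + 1) ⊆ D n := by
      intro n U hU
      refine ⟨?_, hU.2⟩
      refine Filter.mem_of_superset hU.1 ?_
      intro m hm
      simp only [hB] at hm ⊢
      rw [← Stream'.tail_drop'] at hm
      exact Hindman.FP.tail _ m hm
    set S : Set (Ultrafilter M) := ⋂ n, D n with hS
    have Snemp : S.Nonempty :=
      IsCompact.nonempty_iInter_of_sequence_nonempty_isCompact_isClosed D hDmono hDnonempty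
        ((hDclosed 0).isCompact) hDclosed
    have Scomp : IsCompact S := (isClosed_iInter hDclosed).isCompact
    have Smul : ∀ᵉ (U ∈ S) (V ∈ S), U * V ∈ S := by
      intro U hU V hV
      rw [hS, Set.mem_iInter] at hU hV ⊢
      intro n
      refine ⟨?_, ?_⟩
      · have : ∀ᶠ m in ↑(U * V), m ∈ B n := by
          rw [Ultrafilter.eventually_mul]
          filter_upwards [(hU n).1] with m hm
          obtain ⟨n', hn⟩ := Hindman.FP.mul hm
          filter_upwards [(hV (n' + n)).1] with m' hm'
          apply hn
          simpa only [Stream'.drop_drop, Nat.add_comm n n'] using hm'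
        exact this
      · exact (nonprincipal_iff_le_cofinite _).1
          (hM U V ((nonprincipal_iff_le_cofinite U).2 (hU 0).2)
            ((nonprincipal_iff_le_cofinite V).2 (hV 0).2))
    obtain ⟨U, hUS, hUidem⟩ := exists_idempotent_in_compact_subsemigroup
      Ultrafilter.continuous_mul_left S Snemp Scomp Smul
    have hU0 : Hindman.FP u ∈ U := by
      have := (Set.mem_iInter.mp hUS 0).1
      simpa [hB] using this
    have hcof : (↑U : Filter M) ≤ Filter.cofinite := (Set.mem_iInter.mp hUS 0).2
    obtain ⟨a, hinj, hFP⟩ := exists_injective_FP_of_idem U hUidem hcof (Hindman.FP u) hU0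
    exact ⟨a, hinj, hFP.trans huA⟩
  · rintro ⟨u, hinj, hsub⟩
    exact ⟨u, hsub,
      Set.infinite_of_injective_forall_mem hinj fun i => Hindman.FP.singleton u i⟩
end
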